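/- Let v(t) = v₁(arcosh t) for t ≥ 1, with v₁(t) = ∫_ℝ dτ/√((1+τ²)(1+(t-τ)²)). For every ε ∈ (0,1) there exists c₃ > 0 such that for all a, y₁, y₂ with ε ≤ a ≤ 1, y₁ > 0, y₂ > 0, y₁ + y₂ ≤ 1: v((y₁+a)/(2√(y₁a))) · v((a+y₂)/(2√(a y₂))) ≤ c₃ · v((y₁+y₂)/(2√(y₁y₂))). -/

import Mathlib

open MeasureTheory Real Set

noncomputable def v1 (t : ℝ) : ℝ :=
  ∫ τ : ℝ, (Real.sqrt ((1 + τ ^ 2) * (1 + (t - τ) ^ 2)))⁻¹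

noncomputable def v (t : ℝ) : ℝ := v1 (Real.log (t + Real.sqrt (t ^ 2 - 1)))

noncomputable def VB.Phi (t : ℝ) : ℝ := (1 + Real.log (1+t))/(1+t)

lemma VB.key_ineq (x y : ℝ) : 1 + (x - y)^2 ≤ 2*(1+x^2)*(1+y^2) := by nlinarith [sq_nonneg (x+y), sq_nonneg (x*y - 1), sq_nonneg (x*y)]

lemma VB.g_cont (t : ℝ) : Continuous (fun τ : ℝ => (Real.sqrt ((1 + τ ^ 2) * (1 + (t - τ) ^ 2)))⁻¹) := by
  have h : Continuous (fun τ : ℝ => Real.sqrt ((1 + τ ^ 2) * (1 + (t - τ) ^ 2))) := by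
    apply Real.continuous_sqrt.comp
    continuity
  exact h.inv₀ (fun τ => ne_of_gt (Real.sqrt_pos.2 (by positivity)))

lemma VB.g_le (t τ : ℝ) : (Real.sqrt ((1 + τ ^ 2) * (1 + (t - τ) ^ 2)))⁻¹ ≤ Real.sqrt (2*(1+t^2)) * (1+τ^2)⁻¹ := by
  have hA : (0:ℝ) < 1 + τ^2 := by positivity
  have key : (1+τ^2) * (1+τ^2) ≤ (2*(1+t^2)) * ((1+τ^2) * (1 + (t-τ)^2)) := by
    have := VB.key_ineq t (t - τ)
    simp only [sub_sub_cancel] at this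
    nlinarith [sq_nonneg τ, this]
  have h1 : (1+τ^2) ≤ Real.sqrt (2*(1+t^2)) * Real.sqrt ((1 + τ ^ 2) * (1 + (t - τ) ^ 2)) := by
    rw [← Real.sqrt_mul (by positivity)]
    calc (1+τ^2) = Real.sqrt ((1+τ^2)*(1+τ^2)) := by rw [Real.sqrt_mul_self hA.le]
    _ ≤ _ := Real.sqrt_le_sqrt key
  have hS : 0 < Real.sqrt ((1 + τ ^ 2) * (1 + (t - τ) ^ 2)) := Real.sqrt_pos.2 (by positivity)
  rw [show Real.sqrt (2*(1+t^2)) * (1+τ^2)⁻¹ = Real.sqrt (2*(1+t^2))/(1+τ^2) by ring,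
    ← one_div, div_le_div_iff₀ hS hA, one_mul]
  linarith [h1]

lemma VB.integrable_g (t : ℝ) : Integrable (fun τ : ℝ => (Real.sqrt ((1 + τ ^ 2) * (1 + (t - τ) ^ 2)))⁻¹) := by
  have hb : Integrable (fun τ : ℝ => Real.sqrt (2*(1+t^2)) * (1+τ^2)⁻¹) :=
    (integrable_inv_one_add_sq).const_mul _
  refine hb.mono' ((VB.g_cont t).aestronglyMeasurable) ?_
  filter_upwards with τ
  rw [Real.norm_eq_abs, abs_of_nonneg (by positivity)]
  exact VB.g_le t τ

lemma VB.v1_nonneg (t : ℝ) : 0 ≤ v1 t := integral_nonneg (fun τ => by positivity)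

lemma VB.integrable_shift (t : ℝ) : Integrable (fun τ : ℝ => (1+(t-τ)^2)⁻¹) := by
  have h : Integrable (fun τ : ℝ => (1+(τ - t)^2)⁻¹) := (integrable_inv_one_add_sq).comp_sub_right t
  refine h.congr (Filter.Eventually.of_forall (fun τ => ?_))
  ring_nf

lemma VB.integral_shift (t : ℝ) : ∫ τ : ℝ, (1+(t-τ)^2)⁻¹ = Real.pi := by
  rw [show (fun τ : ℝ => (1+(t-τ)^2)⁻¹) = fun τ => (1+(τ-t)^2)⁻¹ from funext fun τ => by ring_nf]
  rw [integral_sub_right_eq_self (fun x => (1+x^2)⁻¹) t]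
  exact integral_univ_inv_one_add_sq

lemma VB.v1_le_pi (t : ℝ) : v1 t ≤ Real.pi := by
  have hmono : v1 t ≤ ∫ τ : ℝ, ((2:ℝ)⁻¹ * ((1+τ^2)⁻¹ + (1+(t-τ)^2)⁻¹)) := by
    refine integral_mono (VB.integrable_g t) (((integrable_inv_one_add_sq).add (VB.integrable_shift t)).const_mul _) (fun τ => ?_)
    have hA : (0:ℝ) < 1 + τ^2 := by positivity
    have hB : (0:ℝ) < 1 + (t-τ)^2 := by positivity
    have ha := Real.sq_sqrt hA.le
    have hb := Real.sq_sqrt hB.le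
    have hsa : 0 < Real.sqrt (1+τ^2) := Real.sqrt_pos.2 hA
    have hsb : 0 < Real.sqrt (1+(t-τ)^2) := Real.sqrt_pos.2 hB
    rw [Real.sqrt_mul (by positivity : (0:ℝ) ≤ 1+τ^2), mul_inv]
    set a := Real.sqrt (1+τ^2)
    set b := Real.sqrt (1+(t-τ)^2)
    rw [← ha, ← hb]
    rw [← mul_inv, show (2:ℝ)⁻¹*((a^2)⁻¹+(b^2)⁻¹) = (a^2+b^2)/(2*(a^2*b^2)) by field_simp; ring,
      inv_eq_one_div, div_le_div_iff₀ (by positivity) (by positivity)]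
    nlinarith [mul_nonneg (mul_pos hsa hsb).le (sq_nonneg (a-b))]
  rw [integral_const_mul, integral_add integrable_inv_one_add_sq (VB.integrable_shift t),
    integral_univ_inv_one_add_sq, VB.integral_shift t] at hmono
  linarith [hmono, Real.pi_pos]

lemma VB.set_le_v1 (t : ℝ) (s : Set ℝ) :
    ∫ τ in s, (Real.sqrt ((1 + τ ^ 2) * (1 + (t - τ) ^ 2)))⁻¹ ≤ v1 t :=
  setIntegral_le_integral (VB.integrable_g t) (Filter.Eventually.of_forall (fun τ => by positivity))

lemma VB.v1_lower_small (t : ℝ) (h0 : 0 ≤ t) (h4 : t ≤ 4) : (6:ℝ)⁻¹ ≤ v1 t := by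
  have h1 : ∫ τ in Ioc (0:ℝ) 1, (6:ℝ)⁻¹ ≤ ∫ τ in Ioc (0:ℝ) 1, (Real.sqrt ((1 + τ ^ 2) * (1 + (t - τ) ^ 2)))⁻¹ := by
    refine setIntegral_mono_on (integrableOn_const (by simp)) ((VB.integrable_g t).integrableOn) measurableSet_Ioc (fun τ hτ => ?_)
    obtain ⟨hτ0, hτ1⟩ := hτ
    have hle : Real.sqrt ((1 + τ ^ 2) * (1 + (t - τ) ^ 2)) ≤ 6 := by
      have h6 : ((1 + τ ^ 2) * (1 + (t - τ) ^ 2)) ≤ 36 := by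
        have e1 : (1 + τ^2) ≤ 2 := by nlinarith
        have e2 : (1 + (t-τ)^2) ≤ 17 := by nlinarith
        nlinarith [mul_le_mul e1 e2 (by positivity) (by norm_num : (0:ℝ) ≤ 2)]
      calc Real.sqrt ((1 + τ ^ 2) * (1 + (t - τ) ^ 2)) ≤ Real.sqrt 36 := Real.sqrt_le_sqrt h6
      _ = 6 := by rw [show (36:ℝ) = 6^2 by norm_num, Real.sqrt_sq (by norm_num)]
    have hpos : 0 < Real.sqrt ((1 + τ ^ 2) * (1 + (t - τ) ^ 2)) := Real.sqrt_pos.2 (by positivity)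
    exact inv_anti₀ hpos hle
  have h2 : ∫ τ in Ioc (0:ℝ) 1, (6:ℝ)⁻¹ = 6⁻¹ := by
    rw [setIntegral_const, Real.volume_real_Ioc]
    norm_num
  linarith [VB.set_le_v1 t (Ioc 0 1), h1, h2.symm.le]

lemma VB.v1_lower_large (t : ℝ) (h4 : 4 ≤ t) : Real.log t / (4 * t) ≤ v1 t := by
  have ht0 : (0:ℝ) < t := by linarith
  have hhalf : (1:ℝ) ≤ t/2 := by linarith
  have h1 : ∫ τ in Ioc (1:ℝ) (t/2), ((2*t)⁻¹ * τ⁻¹) ≤ ∫ τ in Ioc (1:ℝ) (t/2), (Real.sqrt ((1 + τ ^ 2) * (1 + (t - τ) ^ 2)))⁻¹ := by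
    refine setIntegral_mono_on ?_ ((VB.integrable_g t).integrableOn) measurableSet_Ioc (fun τ hτ => ?_)
    · refine (ContinuousOn.integrableOn_Icc ?_).mono_set Ioc_subset_Icc_self
      refine ContinuousOn.mul continuousOn_const (ContinuousOn.inv₀ continuousOn_id (fun x hx => ?_))
      have : (1:ℝ) ≤ x := hx.1
      exact ne_of_gt (by linarith)
    · obtain ⟨hτ1, hτ2⟩ := hτ
      have hτpos : (0:ℝ) < τ := by linarith
      have hle : Real.sqrt ((1 + τ ^ 2) * (1 + (t - τ) ^ 2)) ≤ 2*t*τ := by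
        have h6 : ((1 + τ ^ 2) * (1 + (t - τ) ^ 2)) ≤ (2*t*τ)^2 := by
          have e1 : (1 + τ^2) ≤ 2*τ^2 := by nlinarith
          have e2 : (1 + (t-τ)^2) ≤ 2*t^2 := by nlinarith
          nlinarith [mul_le_mul e1 e2 (by positivity) (by positivity : (0:ℝ) ≤ 2*τ^2)]
        calc Real.sqrt ((1 + τ ^ 2) * (1 + (t - τ) ^ 2)) ≤ Real.sqrt ((2*t*τ)^2) := Real.sqrt_le_sqrt h6
        _ = 2*t*τ := Real.sqrt_sq (by positivity)
      have hpos : 0 < Real.sqrt ((1 + τ ^ 2) * (1 + (t - τ) ^ 2)) := Real.sqrt_pos.2 (by positivity)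
      calc (2*t)⁻¹ * τ⁻¹ = (2*t*τ)⁻¹ := by rw [← mul_inv]
      _ ≤ _ := inv_anti₀ hpos hle
  have h2 : ∫ τ in Ioc (1:ℝ) (t/2), ((2*t)⁻¹ * τ⁻¹) = (2*t)⁻¹ * Real.log (t/2) := by
    rw [← intervalIntegral.integral_of_le hhalf, intervalIntegral.integral_const_mul,
      integral_inv_of_pos one_pos (by linarith : (0:ℝ) < t/2)]
    norm_num
  have h3 : Real.log t / (4*t) ≤ (2*t)⁻¹ * Real.log (t/2) := by
    have hlog2 : Real.log 2 ≤ Real.log t / 2 := by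
      have : Real.log 4 ≤ Real.log t := Real.log_le_log (by norm_num) h4
      have h4eq : Real.log 4 = 2 * Real.log 2 := by
        rw [show (4:ℝ) = 2^2 by norm_num, Real.log_pow]; push_cast; ring
      linarith
    have hlogt : 0 ≤ Real.log t := Real.log_nonneg (by linarith)
    have expand : (2*t)⁻¹ * Real.log (t/2) = (Real.log t - Real.log 2)/(2*t) := by
      rw [Real.log_div (ne_of_gt ht0) (by norm_num)]; ring
    rw [expand, div_le_div_iff₀ (by positivity) (by positivity)]
    nlinarith [mul_nonneg (by linarith : (0:ℝ) ≤ Real.log t - 2*Real.log 2) ht0.le]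
  calc Real.log t / (4*t) ≤ (2*t)⁻¹ * Real.log (t/2) := h3
  _ ≤ v1 t := by rw [← h2] at *; linarith [VB.set_le_v1 t (Ioc 1 (t/2)), h1]

lemma VB.integrableOn_inv_sq {s : Set ℝ} (hs : MeasurableSet s) (h1 : ∀ x ∈ s, 1 ≤ |x|) :
    IntegrableOn (fun x : ℝ => (x^2)⁻¹) s := by
  refine Integrable.mono' (((integrable_inv_one_add_sq).const_mul 2).restrict (s := s)) ?_ ?_
  · exact ((measurable_id.pow_const 2).inv).aestronglyMeasurable
  · rw [ae_restrict_iff' hs]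
    filter_upwards with x hx
    have hx1 : 1 ≤ x^2 := by
      have := h1 x hx
      nlinarith [sq_abs x, this]
    rw [Real.norm_eq_abs, abs_of_nonneg (by positivity)]
    rw [inv_le_iff_one_le_mul₀ (by positivity)]
    have : (0:ℝ) < 1 + x^2 := by positivity
    rw [show 2*(1+x^2)⁻¹*x^2 = (2*x^2)/(1+x^2) by ring, le_div_iff₀ this]
    nlinarith

lemma VB.integral_Ioi_inv_sq {c : ℝ} (hc : 1 ≤ c) : ∫ x in Ioi c, (x^2)⁻¹ = c⁻¹ := by
  have hc0 : (0:ℝ) < c := by linarith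
  have := integral_Ioi_of_hasDerivAt_of_tendsto' (f := fun x : ℝ => -x⁻¹) (f' := fun x : ℝ => (x^2)⁻¹)
    (a := c) (m := 0) ?_ ?_ ?_
  · rw [this]; ring
  · intro x hx
    have hx0 : x ≠ 0 := by have : c ≤ x := hx; exact ne_of_gt (by linarith)
    have h := (hasDerivAt_inv hx0).neg
    simp only [neg_neg] at h
    exact h
  · exact VB.integrableOn_inv_sq measurableSet_Ioi (fun x hx => by
      rw [abs_of_pos (by have : c < x := hx; linarith)]; have : c < x := hx; linarith)
  · simpa using (tendsto_inv_atTop_zero (𝕜 := ℝ)).neg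

lemma VB.integral_Iic_inv_sq {c : ℝ} (hc : 1 ≤ c) : ∫ x in Iic (-c), (x^2)⁻¹ = c⁻¹ := by
  have h := integral_comp_neg_Iic (-c) (fun x : ℝ => (x^2)⁻¹)
  simp only [neg_neg, neg_sq] at h
  rw [h]
  exact VB.integral_Ioi_inv_sq hc

lemma VB.cont_invsqrt : Continuous (fun τ : ℝ => (Real.sqrt (1+τ^2))⁻¹) := by
  have h : Continuous (fun τ : ℝ => Real.sqrt (1 + τ ^ 2)) := by
    apply Real.continuous_sqrt.comp; continuity
  exact h.inv₀ (fun τ => ne_of_gt (Real.sqrt_pos.2 (by positivity)))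

lemma VB.cont_invsqrt2 (t : ℝ) : Continuous (fun τ : ℝ => (Real.sqrt (1+(t-τ)^2))⁻¹) := by
  have h : Continuous (fun τ : ℝ => Real.sqrt (1 + (t-τ) ^ 2)) := by
    apply Real.continuous_sqrt.comp; continuity
  exact h.inv₀ (fun τ => ne_of_gt (Real.sqrt_pos.2 (by positivity)))

lemma VB.interval_arsinh (a b : ℝ) : ∫ τ in a..b, (Real.sqrt (1+τ^2))⁻¹ = Real.arsinh b - Real.arsinh a :=
  intervalIntegral.integral_eq_sub_of_hasDerivAt (fun x _ => Real.hasDerivAt_arsinh x)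
    (VB.cont_invsqrt.intervalIntegrable a b)

lemma VB.interval_arsinh2 (t a b : ℝ) :
    ∫ τ in a..b, (Real.sqrt (1+(t-τ)^2))⁻¹ = Real.arsinh (t-a) - Real.arsinh (t-b) := by
  have key : ∀ x : ℝ, HasDerivAt (fun τ : ℝ => -Real.arsinh (t - τ)) ((Real.sqrt (1+(t-x)^2))⁻¹) x := by
    intro x
    have h1 : HasDerivAt (fun τ : ℝ => t - τ) (-1) x := by
      simpa using ((hasDerivAt_id x).const_sub t)
    have h2 := (Real.hasDerivAt_arsinh (t-x)).comp x h1
    have h3 := h2.neg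
    have h4 : HasDerivAt (fun τ : ℝ => -Real.arsinh (t - τ)) (-((Real.sqrt (1+(t-x)^2))⁻¹ * -1)) x := h3
    simpa using h4
  have := intervalIntegral.integral_eq_sub_of_hasDerivAt (fun x _ => key x)
    ((VB.cont_invsqrt2 t).intervalIntegrable a b)
  rw [this]; ring

lemma VB.arsinh_le_log {y : ℝ} (hy : 0 ≤ y) : Real.arsinh y ≤ Real.log (1+2*y) := by
  rw [Real.arsinh]
  apply Real.log_le_log (by positivity)
  have : Real.sqrt (1+y^2) ≤ 1 + y := by
    rw [show (1:ℝ)+y^2 = (1+y)^2 - 2*y by ring]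
    calc Real.sqrt ((1+y)^2 - 2*y) ≤ Real.sqrt ((1+y)^2) := Real.sqrt_le_sqrt (by nlinarith)
    _ = 1+y := Real.sqrt_sq (by linarith)
  linarith

lemma VB.v1_upper_large (t : ℝ) (h2 : 2 ≤ t) : v1 t ≤ 12 * VB.Phi t := by
  have ht0 : (0:ℝ) < t := by linarith
  have hInt := VB.integrable_g t
  set G : ℝ → ℝ := fun τ : ℝ => (Real.sqrt ((1 + τ ^ 2) * (1 + (t - τ) ^ 2)))⁻¹ with hG
  -- splitting
  have e1 : (∫ τ in Iic (3*t/2), G τ) + (∫ τ in Ioi (3*t/2), G τ) = v1 t :=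
    intervalIntegral.integral_Iic_add_Ioi hInt.integrableOn hInt.integrableOn
  have e2 : (∫ τ in Iic (3*t/2), G τ) - (∫ τ in Iic (t/2), G τ) = ∫ τ in (t/2)..(3*t/2), G τ :=
    intervalIntegral.integral_Iic_sub_Iic hInt.integrableOn hInt.integrableOn
  have e3 : (∫ τ in Iic (t/2), G τ) - (∫ τ in Iic (-(t/2)), G τ) = ∫ τ in (-(t/2))..(t/2), G τ :=
    intervalIntegral.integral_Iic_sub_Iic hInt.integrableOn hInt.integrableOn
  -- region D : Iic (-(t/2))
  have hD : (∫ τ in Iic (-(t/2)), G τ) ≤ 2/t := by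
    have h1s : ∀ x ∈ Iic (-(t/2)), (1:ℝ) ≤ |x| := by
      intro x hx
      simp only [mem_Iic] at hx
      rw [abs_of_nonpos (by linarith)]
      linarith
    have hmaj : (∫ τ in Iic (-(t/2)), G τ) ≤ ∫ τ in Iic (-(t/2)), (τ^2)⁻¹ := by
      refine setIntegral_mono_on hInt.integrableOn (VB.integrableOn_inv_sq measurableSet_Iic h1s) measurableSet_Iic (fun τ hτ => ?_)
      simp only [mem_Iic] at hτ
      have hτ1 : τ ≤ -1 := by linarith
      have hτsq : (0:ℝ) < τ^2 := by nlinarith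
      have hprod : (τ^2)*(τ^2) ≤ (1 + τ ^ 2) * (1 + (t - τ) ^ 2) := by
        have f1 : τ^2 ≤ 1 + τ^2 := by linarith
        have f2 : τ^2 ≤ 1 + (t-τ)^2 := by nlinarith
        nlinarith [mul_le_mul f1 f2 (by positivity) (by positivity : (0:ℝ) ≤ 1 + τ^2)]
      have hs : τ^2 ≤ Real.sqrt ((1 + τ ^ 2) * (1 + (t - τ) ^ 2)) := by
        calc (τ^2 : ℝ) = Real.sqrt ((τ^2)*(τ^2)) := (Real.sqrt_mul_self (by positivity)).symm
        _ ≤ _ := Real.sqrt_le_sqrt hprod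
      exact inv_anti₀ hτsq hs
    rw [VB.integral_Iic_inv_sq (by linarith : (1:ℝ) ≤ t/2)] at hmaj
    rw [inv_div] at hmaj
    exact hmaj
  -- region C : Ioi (3*t/2)
  have hC : (∫ τ in Ioi (3*t/2), G τ) ≤ 2/t := by
    have h1s : ∀ x ∈ Ioi (3*t/2), (1:ℝ) ≤ |x| := by
      intro x hx
      simp only [mem_Ioi] at hx
      rw [abs_of_pos (by linarith)]
      linarith
    have hmaj : (∫ τ in Ioi (3*t/2), G τ) ≤ ∫ τ in Ioi (3*t/2), 3*(τ^2)⁻¹ := by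
      refine setIntegral_mono_on hInt.integrableOn ((VB.integrableOn_inv_sq measurableSet_Ioi h1s).const_mul 3) measurableSet_Ioi (fun τ hτ => ?_)
      simp only [mem_Ioi] at hτ
      have hτ3 : 3 ≤ τ := by linarith
      have hτsq : (0:ℝ) < τ^2/3 := by nlinarith
      have hprod : (τ^2/3)*(τ^2/3) ≤ (1 + τ ^ 2) * (1 + (t - τ) ^ 2) := by
        have f1 : τ^2 ≤ 1 + τ^2 := by linarith
        have f2 : τ^2/9 ≤ 1 + (t-τ)^2 := by
          have h9 : τ/3 ≤ τ - t := by linarith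
          nlinarith [mul_self_le_mul_self (show (0:ℝ) ≤ τ/3 by linarith) h9]
        nlinarith [mul_le_mul f1 f2 (by positivity) (by positivity : (0:ℝ) ≤ 1 + τ^2)]
      have hs : τ^2/3 ≤ Real.sqrt ((1 + τ ^ 2) * (1 + (t - τ) ^ 2)) := by
        calc (τ^2/3 : ℝ) = Real.sqrt ((τ^2/3)*(τ^2/3)) := (Real.sqrt_mul_self (by positivity)).symm
        _ ≤ _ := Real.sqrt_le_sqrt hprod
      have := inv_anti₀ hτsq hs
      calc G τ ≤ (τ^2/3)⁻¹ := this
      _ = 3*(τ^2)⁻¹ := by field_simp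
    rw [integral_const_mul, VB.integral_Ioi_inv_sq (by linarith : (1:ℝ) ≤ 3*t/2)] at hmaj
    calc (∫ τ in Ioi (3*t/2), G τ) ≤ 3 * (3*t/2)⁻¹ := hmaj
    _ = 2/t := by field_simp
  -- region A : interval -(t/2) .. t/2
  have hA : (∫ τ in (-(t/2))..(t/2), G τ) ≤ (2/t) * (2 * Real.arsinh (t/2)) := by
    have hmono : (∫ τ in (-(t/2))..(t/2), G τ) ≤ ∫ τ in (-(t/2))..(t/2), (2/t) * (Real.sqrt (1+τ^2))⁻¹ := by
      refine intervalIntegral.integral_mono_on (by linarith) hInt.intervalIntegrable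
        ((continuous_const.mul VB.cont_invsqrt).intervalIntegrable _ _) (fun τ hτ => ?_)
      obtain ⟨hτ1, hτ2⟩ := hτ
      have hsplit : Real.sqrt ((1 + τ ^ 2) * (1 + (t - τ) ^ 2))
          = Real.sqrt (1+τ^2) * Real.sqrt (1+(t-τ)^2) := Real.sqrt_mul (by positivity) _
      have hge : Real.sqrt (1+τ^2) * (t/2) ≤ Real.sqrt ((1 + τ ^ 2) * (1 + (t - τ) ^ 2)) := by
        rw [hsplit]
        have hg2 : (t/2) ≤ Real.sqrt (1+(t-τ)^2) := by
          calc (t/2 : ℝ) = Real.sqrt ((t/2)^2) := (Real.sqrt_sq (by linarith)).symm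
          _ ≤ _ := Real.sqrt_le_sqrt (by nlinarith)
        exact mul_le_mul_of_nonneg_left hg2 (Real.sqrt_nonneg _)
      have hpos : (0:ℝ) < Real.sqrt (1+τ^2) * (t/2) := by
        apply mul_pos (Real.sqrt_pos.2 (by positivity)) (by linarith)
      calc G τ ≤ (Real.sqrt (1+τ^2) * (t/2))⁻¹ := inv_anti₀ hpos hge
      _ = (2/t) * (Real.sqrt (1+τ^2))⁻¹ := by
        rw [mul_inv]
        rw [show ((t:ℝ)/2)⁻¹ = 2/t from inv_div t 2]
        ring
    rw [intervalIntegral.integral_const_mul, VB.interval_arsinh, Real.arsinh_neg] at hmono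
    calc (∫ τ in (-(t/2))..(t/2), G τ) ≤ (2/t) * (Real.arsinh (t/2) - -Real.arsinh (t/2)) := hmono
    _ = (2/t) * (2 * Real.arsinh (t/2)) := by ring
  -- region B : interval t/2 .. 3t/2
  have hB : (∫ τ in (t/2)..(3*t/2), G τ) ≤ (2/t) * (2 * Real.arsinh (t/2)) := by
    have hmono : (∫ τ in (t/2)..(3*t/2), G τ) ≤ ∫ τ in (t/2)..(3*t/2), (2/t) * (Real.sqrt (1+(t-τ)^2))⁻¹ := by
      refine intervalIntegral.integral_mono_on (by linarith) hInt.intervalIntegrable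
        ((continuous_const.mul (VB.cont_invsqrt2 t)).intervalIntegrable _ _) (fun τ hτ => ?_)
      obtain ⟨hτ1, hτ2⟩ := hτ
      have hsplit : Real.sqrt ((1 + τ ^ 2) * (1 + (t - τ) ^ 2))
          = Real.sqrt (1+τ^2) * Real.sqrt (1+(t-τ)^2) := Real.sqrt_mul (by positivity) _
      have hge : (t/2) * Real.sqrt (1+(t-τ)^2) ≤ Real.sqrt ((1 + τ ^ 2) * (1 + (t - τ) ^ 2)) := by
        rw [hsplit]
        have hg2 : (t/2) ≤ Real.sqrt (1+τ^2) := by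
          calc (t/2 : ℝ) = Real.sqrt ((t/2)^2) := (Real.sqrt_sq (by linarith)).symm
          _ ≤ _ := Real.sqrt_le_sqrt (by nlinarith)
        exact mul_le_mul_of_nonneg_right hg2 (Real.sqrt_nonneg _)
      have hpos : (0:ℝ) < (t/2) * Real.sqrt (1+(t-τ)^2) := by
        apply mul_pos (by linarith) (Real.sqrt_pos.2 (by positivity))
      calc G τ ≤ ((t/2) * Real.sqrt (1+(t-τ)^2))⁻¹ := inv_anti₀ hpos hge
      _ = (2/t) * (Real.sqrt (1+(t-τ)^2))⁻¹ := by
        rw [mul_inv, show ((t:ℝ)/2)⁻¹ = 2/t from inv_div t 2]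
    rw [intervalIntegral.integral_const_mul, VB.interval_arsinh2] at hmono
    have ha1 : t - t/2 = t/2 := by ring
    have ha2 : t - 3*t/2 = -(t/2) := by ring
    rw [ha1, ha2, Real.arsinh_neg] at hmono
    calc (∫ τ in (t/2)..(3*t/2), G τ) ≤ (2/t) * (Real.arsinh (t/2) - -Real.arsinh (t/2)) := hmono
    _ = (2/t) * (2 * Real.arsinh (t/2)) := by ring
  -- combine
  have hS : Real.arsinh (t/2) ≤ Real.log (1+t) := by
    have := VB.arsinh_le_log (by linarith : (0:ℝ) ≤ t/2)
    rwa [show 1+2*(t/2) = 1+t by ring] at this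
  have hL0 : 0 ≤ Real.log (1+t) := Real.log_nonneg (by linarith)
  have hsum : v1 t ≤ 4/t + (8/t) * Real.log (1+t) := by
    have : v1 t = (∫ τ in Iic (-(t/2)), G τ) + (∫ τ in (-(t/2))..(t/2), G τ)
        + (∫ τ in (t/2)..(3*t/2), G τ) + (∫ τ in Ioi (3*t/2), G τ) := by
      rw [← e1, ← e2, ← e3]; ring
    rw [this]
    have ht' : (0:ℝ) ≤ 2/t := by positivity
    have hSL : (2/t) * (2 * Real.arsinh (t/2)) ≤ (2/t) * (2 * Real.log (1+t)) := by
      apply mul_le_mul_of_nonneg_left (by linarith) ht'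
    have hfin : 2/t + (2/t) * (2 * Real.log (1+t)) + (2/t) * (2 * Real.log (1+t)) + 2/t
        = 4/t + (8/t) * Real.log (1+t) := by ring
    linarith [hD, hC, hA, hB, hSL]
  calc v1 t ≤ 4/t + (8/t) * Real.log (1+t) := hsum
  _ = (4 + 8 * Real.log (1+t))/t := by ring
  _ ≤ 12 * VB.Phi t := by
    rw [VB.Phi, div_le_iff₀ ht0, show 12 * ((1 + Real.log (1+t))/(1+t)) = (12 * (1 + Real.log (1+t)))/(1+t) by ring, div_mul_eq_mul_div, le_div_iff₀ (by linarith : (0:ℝ) < 1+t)]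
    nlinarith [hL0, h2]

namespace VB

lemma Phi_pos {t : ℝ} (ht : 0 ≤ t) : 0 < Phi t := by
  have : 0 ≤ Real.log (1+t) := Real.log_nonneg (by linarith)
  rw [Phi]; positivity

lemma Phi_le_one {t : ℝ} (ht : 0 ≤ t) : Phi t ≤ 1 := by
  have h := Real.log_le_sub_one_of_pos (show (0:ℝ) < 1+t by linarith)
  rw [Phi, div_le_one (by linarith)]
  linarith

lemma log_diff_le {u v : ℝ} (hu : 0 ≤ u) (huv : u ≤ v) :
    (Real.log (1+v) - Real.log (1+u)) * (1+u) ≤ v - u := by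
  have h1 : Real.log (1+v) - Real.log (1+u) = Real.log ((1+v)/(1+u)) :=
    (Real.log_div (by linarith) (by linarith)).symm
  have h2 := Real.log_le_sub_one_of_pos (div_pos (show (0:ℝ) < 1+v by linarith) (show (0:ℝ) < 1+u by linarith))
  rw [h1, ← le_div_iff₀ (show (0:ℝ) < 1+u by linarith)]
  calc Real.log ((1+v)/(1+u)) ≤ (1+v)/(1+u) - 1 := h2
  _ = (v-u)/(1+u) := by field_simp; ring
  _ ≤ _ := le_refl _

lemma Phi_anti {u v : ℝ} (hu : 0 ≤ u) (huv : u ≤ v) : Phi v ≤ Phi u := by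
  have hld := log_diff_le hu huv
  have hLu : 0 ≤ Real.log (1+u) := Real.log_nonneg (by linarith)
  rw [Phi, Phi, div_le_div_iff₀ (by linarith) (by linarith)]
  nlinarith [hld, hLu]

lemma Phi_submul_aux {x y : ℝ} (hy : 0 ≤ y) (hyx : y ≤ x) : Phi x * Phi y ≤ 2 * Phi (x+y) := by
  have hx : (0:ℝ) ≤ x := le_trans hy hyx
  have hLy : 0 ≤ Real.log (1+y) := Real.log_nonneg (by linarith)
  have hLx : 0 ≤ Real.log (1+x) := Real.log_nonneg (by linarith)
  have hLs : Real.log (1+x) ≤ Real.log (1+(x+y)) := Real.log_le_log (by linarith) (by linarith)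
  have hLyy : Real.log (1+y) ≤ y := by
    have := Real.log_le_sub_one_of_pos (show (0:ℝ) < 1+y by linarith)
    linarith
  rw [Phi, Phi, Phi, div_mul_div_comm, ← mul_div_assoc, div_le_div_iff₀ (by positivity) (by positivity)]
  have key1 : (1 + Real.log (1+y)) * (1+(x+y)) ≤ 2 * ((1+x)*(1+y)) := by nlinarith
  have key2 : (1 + Real.log (1+x)) ≤ (1 + Real.log (1+(x+y))) := by linarith
  calc (1 + Real.log (1+x)) * (1 + Real.log (1+y)) * (1+(x+y))
      = (1 + Real.log (1+x)) * ((1 + Real.log (1+y)) * (1+(x+y))) := by ring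
  _ ≤ (1 + Real.log (1+(x+y))) * (2 * ((1+x)*(1+y))) := by
      apply mul_le_mul key2 key1 (mul_nonneg (by linarith) (by linarith)) (by linarith)
  _ = 2 * (1 + Real.log (1+(x+y))) * ((1+x)*(1+y)) := by ring
lemma Phi_submul {x y : ℝ} (hx : 0 ≤ x) (hy : 0 ≤ y) : Phi x * Phi y ≤ 2 * Phi (x+y) := by
  rcases le_total y x with h | h
  · exact Phi_submul_aux hy h
  · rw [mul_comm, add_comm]
    exact Phi_submul_aux hx h

lemma v_eq_aux {p q : ℝ} (hq : 0 < q) (hqp : q ≤ p) :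
    v ((p+q)/(2*Real.sqrt (p*q))) = v1 ((Real.log p - Real.log q)/2) := by
  have hp : 0 < p := lt_of_lt_of_le hq hqp
  have hupos : 0 < Real.sqrt (p*q) := Real.sqrt_pos.2 (by positivity)
  set u := Real.sqrt (p*q) with hu
  have hu2 : u^2 = p*q := Real.sq_sqrt (by positivity)
  have hden : (2*u)^2 = 4*(p*q) := by rw [mul_pow, hu2]; ring
  have hX2 : ((p+q)/(2*u))^2 - 1 = ((p-q)/(2*u))^2 := by
    rw [div_pow, div_pow, hden, div_sub_one (by positivity)]
    congr 1
    ring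
  have hsq : Real.sqrt (((p+q)/(2*u))^2 - 1) = (p-q)/(2*u) := by
    rw [hX2]
    exact Real.sqrt_sq (div_nonneg (by linarith) (by positivity))
  rw [v, hsq]
  have harg : (p+q)/(2*u) + (p-q)/(2*u) = p/u := by
    rw [← add_div, show p+q+(p-q) = 2*p by ring]
    rw [mul_div_mul_left p u (by norm_num : (2:ℝ) ≠ 0)]
  rw [harg, Real.log_div (ne_of_gt hp) (ne_of_gt hupos), hu, Real.log_sqrt (by positivity),
    Real.log_mul (ne_of_gt hp) (ne_of_gt hq)]
  congr 1
  ring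

lemma v_eq {p q : ℝ} (hp : 0 < p) (hq : 0 < q) :
    v ((p+q)/(2*Real.sqrt (p*q))) = v1 (|Real.log p - Real.log q|/2) := by
  rcases le_total q p with h | h
  · rw [abs_of_nonneg (by simp [sub_nonneg]; exact Real.log_le_log hq h)]
    exact v_eq_aux hq h
  · rw [abs_of_nonpos (by simp [sub_nonpos]; exact Real.log_le_log hp h),
      show (p+q) = q+p by ring, mul_comm p q, show -(Real.log p - Real.log q) = Real.log q - Real.log p by ring]
    exact v_eq_aux hp h

end VB

lemma VB.v1_upper {t : ℝ} (ht : 0 ≤ t) : v1 t ≤ 12 * VB.Phi t := by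
  rcases le_total t 2 with h | h
  · have hP : (1:ℝ)/3 ≤ VB.Phi t := by
      rw [VB.Phi, div_le_div_iff₀ (by norm_num) (by linarith)]
      have : 0 ≤ Real.log (1+t) := Real.log_nonneg (by linarith)
      nlinarith
    linarith [VB.v1_le_pi t, Real.pi_le_four]
  · exact VB.v1_upper_large t h

lemma VB.v1_lower {t : ℝ} (ht : 0 ≤ t) : VB.Phi t ≤ 30 * v1 t := by
  rcases le_total t 4 with h | h
  · have := VB.v1_lower_small t ht h
    have := VB.Phi_le_one ht
    linarith
  · have hlog1 : 1 ≤ Real.log t := by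
      have he : Real.exp 1 < t := by
        have := Real.exp_one_lt_d9
        linarith
      have := Real.log_lt_log (Real.exp_pos 1) he
      rw [Real.log_exp] at this
      linarith
    have hlog2 : Real.log 2 ≤ 1 := by
      have := Real.log_le_sub_one_of_pos (show (0:ℝ) < 2 by norm_num)
      linarith
    have hL : Real.log (1+t) ≤ Real.log 2 + Real.log t := by
      rw [← Real.log_mul (by norm_num) (by linarith)]
      exact Real.log_le_log (by linarith) (by nlinarith)
    have hstep : VB.Phi t ≤ 30 * (Real.log t / (4*t)) := by
      rw [VB.Phi, div_le_iff₀ (by linarith : (0:ℝ) < 1+t),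
        show 30 * (Real.log t / (4*t)) = (30 * Real.log t) / (4*t) by ring,
        div_mul_eq_mul_div, le_div_iff₀ (by linarith : (0:ℝ) < 4*t)]
      nlinarith [hlog1, hlog2, hL]
    have := VB.v1_lower_large t h
    linarith
  
theorem v_product_bound (ε : ℝ) (hε : ε ∈ Set.Ioo (0 : ℝ) 1) :
    ∃ c₃ : ℝ, 0 < c₃ ∧ ∀ a y₁ y₂ : ℝ, ε ≤ a → a ≤ 1 → 0 < y₁ → 0 < y₂ → y₁ + y₂ ≤ 1 →
      v ((y₁ + a) / (2 * Real.sqrt (y₁ * a))) * v ((a + y₂) / (2 * Real.sqrt (a * y₂))) ≤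
        c₃ * v ((y₁ + y₂) / (2 * Real.sqrt (y₁ * y₂))) := by
  refine ⟨8640, by norm_num, fun a y₁ y₂ hεa ha1 hy₁ hy₂ hsum => ?_⟩
  have ha : 0 < a := lt_of_lt_of_le hε.1 hεa
  set s₁ : ℝ := |Real.log y₁ - Real.log a| / 2 with hs₁
  set s₂ : ℝ := |Real.log a - Real.log y₂| / 2 with hs₂
  set s₃ : ℝ := |Real.log y₁ - Real.log y₂| / 2 with hs₃
  have hs₁0 : 0 ≤ s₁ := by rw [hs₁]; positivity
  have hs₂0 : 0 ≤ s₂ := by rw [hs₂]; positivity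
  have hs₃0 : 0 ≤ s₃ := by rw [hs₃]; positivity
  have htri : s₃ ≤ s₁ + s₂ := by
    have := abs_sub_le (Real.log y₁) (Real.log a) (Real.log y₂)
    rw [hs₁, hs₂, hs₃]; linarith
  have e1 : v ((y₁ + a) / (2 * Real.sqrt (y₁ * a))) = v1 s₁ := VB.v_eq hy₁ ha
  have e2 : v ((a + y₂) / (2 * Real.sqrt (a * y₂))) = v1 s₂ := VB.v_eq ha hy₂
  have e3 : v ((y₁ + y₂) / (2 * Real.sqrt (y₁ * y₂))) = v1 s₃ := VB.v_eq hy₁ hy₂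
  rw [e1, e2, e3]
  have h1 : v1 s₁ ≤ 12 * VB.Phi s₁ := VB.v1_upper hs₁0
  have h2 : v1 s₂ ≤ 12 * VB.Phi s₂ := VB.v1_upper hs₂0
  have hP1 : 0 < VB.Phi s₁ := VB.Phi_pos hs₁0
  have hP2 : 0 < VB.Phi s₂ := VB.Phi_pos hs₂0
  calc v1 s₁ * v1 s₂ ≤ (12 * VB.Phi s₁) * (12 * VB.Phi s₂) :=
        mul_le_mul h1 h2 (VB.v1_nonneg s₂) (by positivity)
  _ = 144 * (VB.Phi s₁ * VB.Phi s₂) := by ring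
  _ ≤ 144 * (2 * VB.Phi (s₁ + s₂)) := by
      have := VB.Phi_submul hs₁0 hs₂0
      linarith
  _ = 288 * VB.Phi (s₁ + s₂) := by ring
  _ ≤ 288 * VB.Phi s₃ := by
      have := VB.Phi_anti hs₃0 htri
      linarith
  _ ≤ 288 * (30 * v1 s₃) := by
      have := VB.v1_lower hs₃0
      linarith
  _ = 8640 * v1 s₃ := by ring
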